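/- Fix p ∈ (1, ∞) and define R(p, n) = sup_{θ>0} ((1 + (1 + θ)^p) / (2 + (n − 2)·θ^p))^{1/p} for integers n > 2. Then R(p, n) − 1 is asymptotically equivalent to ((p − 1)/(2p))·n^{−1/(p−1)} as n → ∞; that is, lim_{n→∞} (R(p, n) − 1) / (((p − 1)/(2p))·n^{−1/(p−1)}) = 1. -/

import Mathlib

open Real Filter





lemma young_aux (p : ℝ) (hp : 1 < p) {c M θ : ℝ} (hc : 0 ≤ c) (hM : 0 < M) (hθ : 0 ≤ θ) :
    c * θ ≤ M * θ ^ p + (p - 1) * (c / p) ^ (p / (p - 1)) * M ^ (-(1 / (p - 1))) := by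
  have hp0 : (0:ℝ) < p := lt_trans one_pos hp
  have hp1 : (0:ℝ) < p - 1 := sub_pos.2 hp
  have hpq : p.HolderConjugate (p / (p - 1)) := (Real.holderConjugate_iff_eq_conjExponent hp).2 rfl
  have hpM : 0 < p * M := mul_pos hp0 hM
  have h : θ * (p*M)^(1/p) * (c * (p*M)^(-(1/p))) ≤
      (θ * (p*M)^(1/p))^p / p + (c * (p*M)^(-(1/p)))^(p/(p-1)) / (p/(p-1)) :=
    Real.young_inequality_of_nonneg (by positivity) (by positivity) hpq
  have hab : θ * (p * M) ^ (1/p) * (c * (p * M) ^ (-(1/p))) = c * θ := by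
    rw [mul_mul_mul_comm, ← Real.rpow_add hpM]
    simp [mul_comm]
  have ha : (θ * (p * M) ^ (1/p)) ^ p / p = M * θ ^ p := by
    rw [Real.mul_rpow hθ (Real.rpow_nonneg hpM.le _), ← Real.rpow_mul hpM.le,
      one_div, inv_mul_cancel₀ hp0.ne', Real.rpow_one]
    field_simp
  have hb : (c * (p*M)^(-(1/p)))^(p/(p-1)) / (p/(p-1)) =
      (p - 1) * (c / p) ^ (p / (p - 1)) * M ^ (-(1 / (p - 1))) := by
    rw [Real.mul_rpow hc (Real.rpow_nonneg hpM.le _), ← Real.rpow_mul hpM.le,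
      Real.div_rpow hc hp0.le, Real.mul_rpow hp0.le hM.le]
    have h1 : -(1/p) * (p/(p-1)) = -(1/(p-1)) := by field_simp
    rw [h1]
    have h4 : p ^ (-(1/(p-1))) / p = (p ^ (p/(p-1)))⁻¹ := by
      have e : -(1/(p-1)) + -1 = -(p/(p-1)) := by field_simp; ring
      rw [div_eq_mul_inv, ← Real.rpow_neg_one p, ← Real.rpow_add hp0, e,
        Real.rpow_neg hp0.le]
    calc (c ^ (p/(p-1)) * (p ^ (-(1/(p-1))) * M ^ (-(1/(p-1))))) / (p/(p-1))
        = c ^ (p/(p-1)) * (p ^ (-(1/(p-1))) / p) * (p-1) * M ^ (-(1/(p-1))) := by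
          field_simp
      _ = (p - 1) * (c ^ (p/(p-1)) / p ^ (p/(p-1))) * M ^ (-(1/(p-1))) := by
          rw [div_eq_mul_inv (c ^ _), ← h4]
          ring
  rw [hab, ha, hb] at h
  exact h


lemma slope_rpow (r : ℝ) :
    Tendsto (fun a : ℝ => ((1 + a) ^ r - 1) / a) (nhdsWithin 0 {0}ᶜ) (nhds r) := by
  have h1 : HasDerivAt (fun a : ℝ => (1 + a) ^ r) r 0 := by
    have h0 : HasDerivAt (fun a : ℝ => 1 + a) 1 0 := (hasDerivAt_id 0).const_add 1
    have h2 : HasDerivAt (fun x : ℝ => x ^ r) (r * (1:ℝ) ^ (r - 1)) 1 :=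
      Real.hasDerivAt_rpow_const (Or.inl one_ne_zero)
    have h2' : HasDerivAt (fun x : ℝ => x ^ r) (r * (1:ℝ) ^ (r - 1)) ((fun a : ℝ => 1 + a) 0) := by
      simpa using h2
    have := h2'.comp (0:ℝ) h0
    simpa [Function.comp_def] using this
  have := hasDerivAt_iff_tendsto_slope.mp h1
  refine this.congr fun a => ?_
  simp [slope_def_field, div_eq_mul_inv]

lemma tendsto_slope_comp (r : ℝ) {b : ℕ → ℝ} (hb : Tendsto b atTop (nhds 0))
    (hbne : ∀ᶠ n in atTop, b n ≠ 0) :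
    Tendsto (fun n => ((1 + b n) ^ r - 1) / b n) atTop (nhds r) :=
  (slope_rpow r).comp (tendsto_nhdsWithin_iff.2 ⟨hb, hbne⟩)

lemma ratio_tendsto (p : ℝ) (hp : 1 < p) {a : ℕ → ℝ} {c' : ℝ} (hc' : c' ≠ 0)
    (ha0 : ∀ᶠ n in atTop, 0 < a n) (ha : Tendsto a atTop (nhds 0))
    (hr : Tendsto (fun n => a n / (c' * (n:ℝ) ^ (-(1/(p-1))))) atTop (nhds 1)) :
    Tendsto (fun n => ((1 + a n) ^ (1/p) - 1) / ((c'/p) * (n:ℝ) ^ (-(1/(p-1)))))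
      atTop (nhds 1) := by
  have hp0 : (0:ℝ) < p := lt_trans one_pos hp
  have hφ := tendsto_slope_comp (1/p) ha (ha0.mono fun n h => h.ne')
  have hprod : Tendsto
      (fun n => (((1 + a n) ^ (1/p) - 1) / a n * p) * (a n / (c' * (n:ℝ) ^ (-(1/(p-1))))))
      atTop (nhds ((1/p * p) * 1)) := (hφ.mul_const p).mul hr
  rw [one_div, inv_mul_cancel₀ hp0.ne', one_mul] at hprod
  refine hprod.congr' ?_
  filter_upwards [ha0, eventually_ge_atTop 1] with n hn hn1
  have hx : (n:ℝ) ^ (-(1/(p-1))) ≠ 0 :=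
    (Real.rpow_pos_of_pos (by exact_mod_cast Nat.lt_of_lt_of_le Nat.zero_lt_one hn1) _).ne'
  field_simp


lemma one_le_rpow_base (p x : ℝ) (hp : 0 ≤ p) (hx : 1 ≤ x) : 1 ≤ x ^ p := by
  calc (1:ℝ) = 1 ^ p := (Real.one_rpow p).symm
  _ ≤ x ^ p := Real.rpow_le_rpow zero_le_one hx hp

lemma key_upper (p : ℝ) (hp : 1 < p) {δ M θ : ℝ} (hδ : 0 < δ) (hθ : 0 < θ)
    (hM : (1 + 1/δ) ^ p ≤ M) :
    1 + (1 + θ) ^ p ≤ (2 + M * θ ^ p) *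
      (1 + (p - 1)/2 * ((((1 + δ) ^ p - 1)/δ)/p) ^ (p/(p-1)) * M ^ (-(1/(p-1)))) := by
  have hp0 : (0:ℝ) < p := lt_trans one_pos hp
  have hM0 : 0 < M := lt_of_lt_of_le (Real.rpow_pos_of_pos (by positivity) p) hM
  set c : ℝ := ((1 + δ) ^ p - 1)/δ with hc_def
  have hc : 0 ≤ c := by
    have h1 : (1:ℝ) ≤ (1 + δ) ^ p := one_le_rpow_base p _ hp0.le (by linarith)
    have h2 := sub_nonneg.2 h1
    positivity
  set E : ℝ := (p - 1)/2 * (c/p) ^ (p/(p-1)) * M ^ (-(1/(p-1))) with hE_def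
  have hE : 0 ≤ E := by
    have h1 : (0:ℝ) ≤ (c/p) ^ (p/(p-1)) := Real.rpow_nonneg (by positivity) _
    have h2 : (0:ℝ) ≤ M ^ (-(1/(p-1))) := Real.rpow_nonneg hM0.le _
    have h3 : (0:ℝ) ≤ (p-1)/2 := by linarith
    positivity
  have hθp : (0:ℝ) ≤ θ ^ p := Real.rpow_nonneg hθ.le _
  rcases le_or_gt θ δ with hcase | hcase
  · -- chord bound
    have chord : (1 + θ) ^ p ≤ 1 + c * θ := by
      have hcv := convexOn_rpow hp.le
      have hmem1 : (1:ℝ) ∈ Set.Ici (0:ℝ) := by norm_num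
      have hmem2 : (1 + δ : ℝ) ∈ Set.Ici (0:ℝ) := Set.mem_Ici.2 (by linarith)
      have ha : (0:ℝ) ≤ 1 - θ/δ := by
        have : θ/δ ≤ 1 := (div_le_one hδ).2 hcase
        linarith
      have hb : (0:ℝ) ≤ θ/δ := by positivity
      have hab : (1 - θ/δ) + θ/δ = 1 := by ring
      have hkey := hcv.2 hmem1 hmem2 ha hb hab
      simp only [smul_eq_mul] at hkey
      have heq : (1 - θ/δ) * 1 + θ/δ * (1 + δ) = 1 + θ := by
        field_simp
        ring
      rw [heq] at hkey
      calc (1 + θ) ^ p ≤ (1 - θ/δ) * 1 ^ p + θ/δ * (1 + δ) ^ p := hkey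
        _ = 1 + c * θ := by
            rw [Real.one_rpow, hc_def]
            field_simp
            ring
    have hyoung := young_aux p hp hc hM0 hθ.le
    have h2E : (p - 1) * (c/p) ^ (p/(p-1)) * M ^ (-(1/(p-1))) = 2 * E := by
      rw [hE_def]; ring
    rw [h2E] at hyoung
    nlinarith [mul_nonneg (mul_nonneg hM0.le hθp) hE]
  · -- large θ
    have h1 : (1 + θ : ℝ) ≤ (1 + 1/δ) * θ := by
      have h1a : (1:ℝ) ≤ θ/δ := (one_le_div hδ).2 hcase.le
      calc (1 + θ : ℝ) ≤ θ/δ + θ := by linarith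
        _ = (1 + 1/δ) * θ := by field_simp; ring
    have h2 : (1 + θ) ^ p ≤ M * θ ^ p := by
      calc (1 + θ) ^ p ≤ ((1 + 1/δ) * θ) ^ p :=
            Real.rpow_le_rpow (by linarith) h1 hp0.le
        _ = (1 + 1/δ) ^ p * θ ^ p := Real.mul_rpow (by positivity) hθ.le
        _ ≤ M * θ ^ p := mul_le_mul_of_nonneg_right hM hθp
    nlinarith [mul_nonneg (mul_nonneg hM0.le hθp) hE]

/-- `R(p, n) = sup_{θ>0} ((1 + (1 + θ)^p) / (2 + (n - 2) θ^p))^{1/p}`. -/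
noncomputable def Rpn (p : ℝ) (n : ℕ) : ℝ :=
  sSup {r : ℝ | ∃ θ : ℝ, 0 < θ ∧
    r = ((1 + (1 + θ) ^ p) / (2 + ((n : ℝ) - 2) * θ ^ p)) ^ (1 / p)}

set_option maxHeartbeats 2000000 in
/-- For fixed `p ∈ (1, ∞)`, one has `R(p, n) - 1 ∼ ((p-1)/(2p)) n^{-1/(p-1)}` as
`n → ∞`, i.e. the ratio of the two sides tends to `1`. -/
theorem Rpn_sub_one_asymptotic (p : ℝ) (hp : 1 < p) :
    Filter.Tendsto
      (fun n : ℕ =>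
        (Rpn p n - 1) / (((p - 1) / (2 * p)) * (n : ℝ) ^ (-(1 / (p - 1)))))
      Filter.atTop (nhds 1) := by
  have hp0 : (0:ℝ) < p := lt_trans one_pos hp
  have hp1 : (0:ℝ) < p - 1 := sub_pos.2 hp
  -- basic tendsto of (n:ℝ) - 2 to atTop
  have hM_atTop : Tendsto (fun n : ℕ => (n:ℝ) - 2) atTop atTop :=
    tendsto_atTop_add_const_right _ (-2) tendsto_natCast_atTop_atTop |>.congr
      (fun n => by ring)
  -- the small parameter δ n
  set δ : ℕ → ℝ := fun n => ((n:ℝ) - 2) ^ (-(1/(2*p))) with hδ_def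
  set cδ : ℕ → ℝ := fun n => ((1 + δ n) ^ p - 1) / δ n with hcδ_def
  set t : ℕ → ℝ := fun n => ((n:ℝ) - 2) ^ (-(1/(p-1))) with ht_def
  set E : ℕ → ℝ := fun n => (p - 1)/2 * ((cδ n)/p) ^ (p/(p-1)) * ((n:ℝ) - 2) ^ (-(1/(p-1)))
    with hE_def
  set e : ℕ → ℝ := fun n => ((1 + t n) ^ p - 1 - t n) / (2 + t n) with he_def
  have hev3 : ∀ᶠ n : ℕ in atTop, (1:ℝ) ≤ (n:ℝ) - 2 := hM_atTop.eventually_ge_atTop 1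
  have hδpos : ∀ᶠ n : ℕ in atTop, 0 < δ n := by
    filter_upwards [hev3] with n hn
    exact Real.rpow_pos_of_pos (by linarith) _
  have htpos : ∀ᶠ n : ℕ in atTop, 0 < t n := by
    filter_upwards [hev3] with n hn
    exact Real.rpow_pos_of_pos (by linarith) _
  have hδ0 : Tendsto δ atTop (nhds 0) :=
    (tendsto_rpow_neg_atTop (by positivity : (0:ℝ) < 1/(2*p))).comp hM_atTop
  have ht0 : Tendsto t atTop (nhds 0) :=
    (tendsto_rpow_neg_atTop (by positivity : (0:ℝ) < 1/(p-1))).comp hM_atTop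
  -- cδ n → p
  have hcδ : Tendsto cδ atTop (nhds p) :=
    tendsto_slope_comp p hδ0 (hδpos.mono fun n h => h.ne')
  have hcδpos : ∀ᶠ n : ℕ in atTop, 0 < cδ n := by
    filter_upwards [hδpos] with n hn
    have h1 : 1 < (1 + δ n) ^ p :=
      (Real.one_lt_rpow_iff_of_pos (x := 1 + δ n) (y := p) (by linarith)).2
        (Or.inl ⟨by linarith, hp0⟩)
    exact div_pos (by linarith) hn
  -- (cδ n / p) ^ (p/(p-1)) → 1
  have hq1 : Tendsto (fun n => ((cδ n)/p) ^ (p/(p-1))) atTop (nhds 1) := by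
    have hcont : ContinuousAt (fun x : ℝ => (x/p) ^ (p/(p-1))) p := by
      apply ContinuousAt.rpow_const
      · exact (continuous_id.div_const p).continuousAt
      · left; simp [hp0.ne']
    have := hcont.tendsto.comp hcδ
    simpa [div_self hp0.ne', Function.comp_def] using this
  -- ((n-2)/n) ^ (-(1/(p-1))) → 1
  have hnn : Tendsto (fun n : ℕ => ((n:ℝ) - 2) / n) atTop (nhds 1) := by
    have h1 : Tendsto (fun n : ℕ => 1 - 2 / (n:ℝ)) atTop (nhds 1) := by
      have := tendsto_const_nhds.div_atTop (f := fun _ : ℕ => (2:ℝ))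
        tendsto_natCast_atTop_atTop
      simpa using tendsto_const_nhds.sub this
    refine h1.congr' ?_
    filter_upwards [eventually_ge_atTop 1] with n hn
    have : (n:ℝ) ≠ 0 := by positivity
    field_simp
  have hrr : Tendsto (fun n : ℕ => (((n:ℝ) - 2) / n) ^ (-(1/(p-1)))) atTop (nhds 1) := by
    have hcont : ContinuousAt (fun x : ℝ => x ^ (-(1/(p-1)))) 1 :=
      Real.continuousAt_rpow_const _ _ (Or.inl one_ne_zero)
    have := hcont.tendsto.comp hnn
    simpa [Function.comp_def] using this
  -- ratio of rpow's
  have hdivpow : ∀ᶠ n : ℕ in atTop,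
      (((n:ℝ) - 2) / n) ^ (-(1/(p-1))) = ((n:ℝ) - 2) ^ (-(1/(p-1))) / (n:ℝ) ^ (-(1/(p-1))) := by
    filter_upwards [hev3, eventually_ge_atTop 1] with n hn hn1
    exact Real.div_rpow (by linarith) (by positivity) _
  -- E is positive and tends to 0
  have hEpos : ∀ᶠ n : ℕ in atTop, 0 < E n := by
    filter_upwards [hcδpos, hev3] with n h1 h2
    have ha : (0:ℝ) < ((cδ n)/p) ^ (p/(p-1)) := Real.rpow_pos_of_pos (by positivity) _
    have hb : (0:ℝ) < ((n:ℝ) - 2) ^ (-(1/(p-1))) := Real.rpow_pos_of_pos (by linarith) _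
    have hc : (0:ℝ) < (p-1)/2 := by linarith
    simp only [hE_def]
    positivity
  have hE0 : Tendsto E atTop (nhds 0) := by
    have h := ((tendsto_const_nhds.mul hq1).mul ht0 :
      Tendsto (fun n => (p - 1)/2 * ((cδ n)/p) ^ (p/(p-1)) * t n) atTop (nhds ((p-1)/2 * 1 * 0)))
    simp only [mul_one, mul_zero] at h
    exact h
  -- ratio for E
  have hErat : Tendsto (fun n => E n / (((p-1)/2) * (n:ℝ) ^ (-(1/(p-1))))) atTop (nhds 1) := by
    have hmain : Tendsto (fun n => ((cδ n)/p) ^ (p/(p-1)) * ((((n:ℝ) - 2) / n) ^ (-(1/(p-1)))))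
        atTop (nhds (1 * 1)) := hq1.mul hrr
    rw [one_mul] at hmain
    refine hmain.congr' ?_
    filter_upwards [hdivpow, htpos, eventually_ge_atTop 1] with n hdp hn hn1
    have hnp : (0:ℝ) < (n:ℝ) ^ (-(1/(p-1))) := Real.rpow_pos_of_pos (by positivity) _
    have hEn : E n = (p - 1)/2 * ((cδ n)/p) ^ (p/(p-1)) * t n := rfl
    have htn2 : t n = ((n:ℝ) - 2) ^ (-(1/(p-1))) := rfl
    rw [hdp, ← htn2, hEn]
    field_simp
  -- e is positive and tends to 0, with the right ratio
  have hs1 : Tendsto (fun n => ((1 + t n) ^ p - 1) / t n - 1) atTop (nhds (p - 1)) :=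
    (tendsto_slope_comp p ht0 (htpos.mono fun n h => h.ne')).sub_const 1
  have hepos : ∀ᶠ n : ℕ in atTop, 0 < e n := by
    filter_upwards [htpos] with n hn
    have h1 : (1 + t n) < (1 + t n) ^ p := by
      have := Real.rpow_lt_rpow_of_exponent_lt (x := 1 + t n) (by linarith) hp
      simpa using this
    exact div_pos (by linarith) (by linarith)
  have he_eq : ∀ᶠ n : ℕ in atTop,
      e n = (((1 + t n) ^ p - 1) / t n - 1) * t n / (2 + t n) := by
    filter_upwards [htpos] with n hn
    rw [he_def]
    field_simp
    try ring
  have he0 : Tendsto e atTop (nhds 0) := by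
    have h2t : Tendsto (fun n => 2 + t n) atTop (nhds 2) := by
      simpa using tendsto_const_nhds.add ht0
    have : Tendsto (fun n => (((1 + t n) ^ p - 1) / t n - 1) * t n / (2 + t n)) atTop
        (nhds ((p - 1) * 0 / 2)) := (hs1.mul ht0).div h2t (by norm_num)
    simp only [mul_zero, zero_div] at this
    exact Tendsto.congr' (he_eq.mono fun n h => h.symm) this
  have herat : Tendsto (fun n => e n / (((p-1)/2) * (n:ℝ) ^ (-(1/(p-1))))) atTop (nhds 1) := by
    have h2t : Tendsto (fun n => ((p-1)/2) * (2 + t n)) atTop (nhds (((p-1)/2) * 2)) :=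
      tendsto_const_nhds.mul (by simpa using tendsto_const_nhds.add ht0)
    have hmain : Tendsto
        (fun n => (((1 + t n) ^ p - 1) / t n - 1) * ((((n:ℝ) - 2) / n) ^ (-(1/(p-1)))) /
          (((p-1)/2) * (2 + t n)))
        atTop (nhds ((p - 1) * 1 / (((p-1)/2) * 2))) := (hs1.mul hrr).div h2t (by
          have : ((p-1)/2) * 2 = p - 1 := by ring
          rw [this]; exact hp1.ne')
    have hlim : (p - 1) * 1 / (((p-1)/2) * 2) = 1 := by
      field_simp
    rw [hlim] at hmain
    refine hmain.congr' ?_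
    filter_upwards [hdivpow, htpos, he_eq, eventually_ge_atTop 1] with n hdp hn hen hn1
    have hnp : (0:ℝ) < (n:ℝ) ^ (-(1/(p-1))) := Real.rpow_pos_of_pos (by positivity) _
    have htn2 : t n = ((n:ℝ) - 2) ^ (-(1/(p-1))) := rfl
    have h2tn : (0:ℝ) < 2 + t n := by linarith
    rw [hdp, ← htn2, hen]
    field_simp
    try exact Or.inl trivial
  -- bracketing of Rpn
  have hbracket : ∀ᶠ n : ℕ in atTop,
      (1 + e n) ^ (1/p) ≤ Rpn p n ∧ Rpn p n ≤ (1 + E n) ^ (1/p) := by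
    filter_upwards [hM_atTop.eventually_ge_atTop (max 1 (2 ^ (2*p))), hδpos, htpos]
      with n hn hδn htn
    have hn1 : (1:ℝ) ≤ (n:ℝ) - 2 := le_trans (le_max_left _ _) hn
    have hn2 : (2:ℝ) ^ (2*p) ≤ (n:ℝ) - 2 := le_trans (le_max_right _ _) hn
    have hM0 : (0:ℝ) < (n:ℝ) - 2 := by linarith
    set M : ℝ := (n:ℝ) - 2 with hM_def
    -- the condition for key_upper
    have hMδ : (1 + 1/(δ n)) ^ p ≤ M := by
      set x : ℝ := M ^ (1/(2*p)) with hx_def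
      have hx0 : 0 < x := Real.rpow_pos_of_pos hM0 _
      have hx2 : (2:ℝ) ≤ x := by
        have h1 : ((2:ℝ) ^ (2*p)) ^ (1/(2*p)) ≤ M ^ (1/(2*p)) :=
          Real.rpow_le_rpow (Real.rpow_nonneg (by norm_num) _) hn2 (by positivity)
        have h2 : ((2:ℝ) ^ (2*p)) ^ (1/(2*p)) = 2 := by
          rw [← Real.rpow_mul (by norm_num : (0:ℝ) ≤ 2)]
          rw [show (2*p) * (1/(2*p)) = 1 by field_simp]
          exact Real.rpow_one 2
        rw [h2] at h1; exact h1
      have hδx : 1/(δ n) = x := by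
        rw [hδ_def]
        simp only
        rw [Real.rpow_neg hM0.le, one_div, inv_inv, hx_def]
      rw [hδx]
      have hxM : x ^ (2*p : ℝ) = M := by
        rw [hx_def, ← Real.rpow_mul hM0.le]
        rw [show (1/(2*p)) * (2*p) = 1 by field_simp]
        exact Real.rpow_one M
      calc (1 + x) ^ p ≤ (2*x) ^ p := Real.rpow_le_rpow (by linarith) (by linarith) hp0.le
        _ = 2 ^ p * x ^ p := Real.mul_rpow (by norm_num) hx0.le
        _ ≤ x ^ p * x ^ p :=
            mul_le_mul_of_nonneg_right (Real.rpow_le_rpow (by norm_num) hx2 hp0.le)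
              (Real.rpow_nonneg hx0.le _)
        _ = x ^ (2*p : ℝ) := by rw [← Real.rpow_add hx0]; ring_nf
        _ = M := hxM
    -- uniform upper bound on members of the set
    have hub : ∀ r ∈ {r : ℝ | ∃ θ : ℝ, 0 < θ ∧
        r = ((1 + (1 + θ) ^ p) / (2 + ((n : ℝ) - 2) * θ ^ p)) ^ (1 / p)},
        r ≤ (1 + E n) ^ (1/p) := by
      rintro r ⟨θ, hθ, rfl⟩
      have hθp : (0:ℝ) < θ ^ p := Real.rpow_pos_of_pos hθ _
      have hden : (0:ℝ) < 2 + M * θ ^ p := by positivity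
      have hnum : (0:ℝ) ≤ 1 + (1 + θ) ^ p := by
        have := Real.rpow_nonneg (by linarith : (0:ℝ) ≤ 1 + θ) p
        linarith
      have hkey := key_upper p hp hδn hθ hMδ
      have hfle : (1 + (1 + θ) ^ p) / (2 + M * θ ^ p) ≤ 1 + E n := by
        rw [div_le_iff₀ hden]
        calc 1 + (1 + θ) ^ p ≤ (2 + M * θ ^ p) *
            (1 + (p - 1)/2 * ((((1 + δ n) ^ p - 1)/(δ n))/p) ^ (p/(p-1)) * M ^ (-(1/(p-1)))) :=
              hkey
          _ = (1 + E n) * (2 + M * θ ^ p) := by rw [hE_def, hcδ_def]; ring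
      exact Real.rpow_le_rpow (by positivity) hfle (by positivity)
    have hne : {r : ℝ | ∃ θ : ℝ, 0 < θ ∧
        r = ((1 + (1 + θ) ^ p) / (2 + ((n : ℝ) - 2) * θ ^ p)) ^ (1 / p)}.Nonempty :=
      ⟨((1 + (1 + 1) ^ p) / (2 + ((n : ℝ) - 2) * 1 ^ p)) ^ (1 / p), 1, one_pos, rfl⟩
    constructor
    · -- lower bound
      have hmem : ((1 + (1 + t n) ^ p) / (2 + ((n : ℝ) - 2) * (t n) ^ p)) ^ (1 / p) ∈
          {r : ℝ | ∃ θ : ℝ, 0 < θ ∧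
            r = ((1 + (1 + θ) ^ p) / (2 + ((n : ℝ) - 2) * θ ^ p)) ^ (1 / p)} :=
        ⟨t n, htn, rfl⟩
      have hle := le_csSup ⟨(1 + E n) ^ (1/p), fun r hr => hub r hr⟩ hmem
      have heq : ((1 + (1 + t n) ^ p) / (2 + ((n : ℝ) - 2) * (t n) ^ p)) ^ (1 / p) =
          (1 + e n) ^ (1/p) := by
        have hMt : ((n : ℝ) - 2) * (t n) ^ p = t n := by
          have e1 : (t n) ^ p = M ^ ((-(1/(p-1))) * p) := by
            rw [show t n = M ^ (-(1/(p-1))) from rfl, ← Real.rpow_mul hM0.le]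
          have e2 : 1 + (-(1/(p-1))) * p = -(1/(p-1)) := by field_simp; ring
          calc ((n : ℝ) - 2) * (t n) ^ p = M ^ (1:ℝ) * M ^ ((-(1/(p-1))) * p) := by
                rw [e1, Real.rpow_one]
            _ = M ^ (1 + (-(1/(p-1))) * p) := (Real.rpow_add hM0 _ _).symm
            _ = t n := by rw [e2]
        rw [hMt]
        congr 1
        rw [he_def]
        have h2t : (0:ℝ) < 2 + t n := by linarith
        field_simp
        ring
      rw [heq] at hle
      exact hle
    · exact csSup_le hne hub
  -- final assembly
  have hlower : Tendsto (fun n => ((1 + e n) ^ (1/p) - 1) /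
      (((p - 1) / (2 * p)) * (n:ℝ) ^ (-(1/(p-1))))) atTop (nhds 1) := by
    have := ratio_tendsto p hp (c' := (p-1)/2) (by positivity) hepos he0 herat
    refine this.congr fun n => ?_
    rw [div_div]
  have hupper : Tendsto (fun n => ((1 + E n) ^ (1/p) - 1) /
      (((p - 1) / (2 * p)) * (n:ℝ) ^ (-(1/(p-1))))) atTop (nhds 1) := by
    have := ratio_tendsto p hp (c' := (p-1)/2) (by positivity) hEpos hE0 hErat
    refine this.congr fun n => ?_
    rw [div_div]
  refine tendsto_of_tendsto_of_tendsto_of_le_of_le' hlower hupper ?_ ?_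
  · filter_upwards [hbracket, eventually_ge_atTop 1] with n hb hn1
    have hd : (0:ℝ) < ((p - 1) / (2 * p)) * (n:ℝ) ^ (-(1/(p-1))) := by
      have h1 : (0:ℝ) < (n:ℝ) ^ (-(1/(p-1))) := Real.rpow_pos_of_pos (by positivity) _
      have h2 : (0:ℝ) < (p-1)/(2*p) := by positivity
      positivity
    exact (div_le_div_iff_of_pos_right hd).2 (sub_le_sub_right hb.1 1)
  · filter_upwards [hbracket, eventually_ge_atTop 1] with n hb hn1
    have hd : (0:ℝ) < ((p - 1) / (2 * p)) * (n:ℝ) ^ (-(1/(p-1))) := by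
      have h1 : (0:ℝ) < (n:ℝ) ^ (-(1/(p-1))) := Real.rpow_pos_of_pos (by positivity) _
      have h2 : (0:ℝ) < (p-1)/(2*p) := by positivity
      positivity
    exact (div_le_div_iff_of_pos_right hd).2 (sub_le_sub_right hb.2 1)
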